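/- Let R be a commutative ring and let (S_i) be a directed family of subrings of R whose union is all of R. If each subring S_i is solid, i.e. the multiplication-induced ℤ-linear map S_i ⊗_ℤ S_i → S_i is bijective, then R is solid, i.e. the multiplication-induced ℤ-linear map R ⊗_ℤ R → R is bijective. -/

import Mathlib

open TensorProduct

/-- If a commutative ring `R` is the union of a directed family of subrings
`S i`, each of which is solid (i.e. `S i ⊗_ℤ S i → S i` is bijective), then
`R` is solid (`R ⊗_ℤ R → R` is bijective). -/
theorem solid_of_directed_union_of_solid {R : Type*} [CommRing R]
    {ι : Type*} (S : ι → Subring R) (hdir : Directed (· ≤ ·) S)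
    (hunion : ∀ x : R, ∃ i, x ∈ S i)
    (hsolid : ∀ i, Function.Bijective (LinearMap.mul' ℤ (S i))) :
    Function.Bijective (LinearMap.mul' ℤ R) := by
  -- the inclusion as a ℤ-linear map
  set ιL : ∀ i, (S i) →ₗ[ℤ] R := fun i =>
    ((S i).subtype : S i →+* R).toAddMonoidHom.toIntLinearMap with hιL
  set f : ∀ i, (S i) ⊗[ℤ] (S i) →ₗ[ℤ] R ⊗[ℤ] R := fun i =>
    TensorProduct.map (ιL i) (ιL i) with hf
  have hcomm : ∀ i, (ιL i).comp (LinearMap.mul' ℤ (S i)) =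
      (LinearMap.mul' ℤ R).comp (f i) := by
    intro i
    apply TensorProduct.ext'
    intro a b
    simp [hf, hιL, LinearMap.mul'_apply]
    show _ = LinearMap.mul' ℤ R ((a:R) ⊗ₜ (b:R))
    rw [LinearMap.mul'_apply]
  have hsurj : ∀ z : R ⊗[ℤ] R, ∃ i, ∃ w : (S i) ⊗[ℤ] (S i), f i w = z := by
    intro z
    induction z using TensorProduct.induction_on with
    | zero =>
      obtain ⟨i, _⟩ := hunion 0
      exact ⟨i, 0, LinearMap.map_zero _⟩
    | tmul a b =>
      obtain ⟨i, hi⟩ := hunion a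
      obtain ⟨j, hj⟩ := hunion b
      obtain ⟨k, hik, hjk⟩ := hdir i j
      exact ⟨k, (⟨a, hik hi⟩ : S k) ⊗ₜ (⟨b, hjk hj⟩ : S k), rfl⟩
    | add x y hx hy =>
      obtain ⟨i, w, hw⟩ := hx
      obtain ⟨j, v, hv⟩ := hy
      obtain ⟨k, hik, hjk⟩ := hdir i j
      -- push w and v into S k
      have hincl : ∀ (a b : ι) (hab : S a ≤ S b),
          (f b).comp (TensorProduct.map
            ((Subring.inclusion hab : S a →+* S b).toAddMonoidHom.toIntLinearMap)
            ((Subring.inclusion hab : S a →+* S b).toAddMonoidHom.toIntLinearMap)) = f a := by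
        intro a b hab
        apply TensorProduct.ext'
        intro x y
        rfl
      refine ⟨k, (TensorProduct.map
            ((Subring.inclusion hik : S i →+* S k).toAddMonoidHom.toIntLinearMap)
            ((Subring.inclusion hik : S i →+* S k).toAddMonoidHom.toIntLinearMap)) w
          + (TensorProduct.map
            ((Subring.inclusion hjk : S j →+* S k).toAddMonoidHom.toIntLinearMap)
            ((Subring.inclusion hjk : S j →+* S k).toAddMonoidHom.toIntLinearMap)) v, ?_⟩
      rw [map_add]
      have h1 := LinearMap.congr_fun (hincl i k hik) w
      have h2 := LinearMap.congr_fun (hincl j k hjk) v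
      rw [← hw, ← hv]
      exact congrArg₂ (· + ·) h1 h2
  constructor
  · rw [injective_iff_map_eq_zero]
    intro z hz
    obtain ⟨i, w, hw⟩ := hsurj z
    have hinj : Function.Injective (ιL i) := Subtype.val_injective
    have : (ιL i) ((LinearMap.mul' ℤ (S i)) w) = 0 := by
      have h := LinearMap.congr_fun (hcomm i) w
      simp only [LinearMap.coe_comp, Function.comp_apply] at h
      rw [h]
      exact (congrArg (LinearMap.mul' ℤ R) hw).trans hz
    have hw0 : (LinearMap.mul' ℤ (S i)) w = 0 := hinj (by simpa using this)
    have : w = 0 := (hsolid i).1 (by simpa using hw0)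
    rw [← hw, this, map_zero]
  · intro r
    exact ⟨r ⊗ₜ 1, by simp [LinearMap.mul'_apply]⟩
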